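/- Let p be prime, h ≥ 1, k ≥ 1, n = p^h, m = n·p^k. Then Φ_m(t) ≡ p (mod Φ_n(t)) in ℤ[t], and consequently Φ_m(C_{Φ_n}) = p·I. -/

import Mathlib

set_option maxHeartbeats 1000000

open Polynomial Matrix

def companion {R : Type*} [CommRing R] (g : R[X]) :
    Matrix (Fin g.natDegree) (Fin g.natDegree) R :=
  Matrix.of fun i j =>
    if (i : ℕ) = 0 then -g.coeff (g.natDegree - 1 - (j : ℕ))
    else if (i : ℕ) = (j : ℕ) + 1 then 1 else 0

/-- The standard (bottom) companion matrix: column `j` is the coefficient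
vector of `X^(j+1) %ₘ g`. -/
noncomputable def stdComp (g : ℤ[X]) : Matrix (Fin g.natDegree) (Fin g.natDegree) ℤ :=
  Matrix.of fun i j => ((X ^ ((j : ℕ) + 1)) %ₘ g).coeff i

lemma aeval_stdComp {g : ℤ[X]} (hg : g.Monic) : aeval (stdComp g) g = 0 := by
  have hkey : stdComp g =
      LinearMap.toMatrixAlgEquiv (AdjoinRoot.powerBasisAux' hg)
        (Algebra.lmul ℤ (AdjoinRoot g) (AdjoinRoot.root g)) := by
    ext i j
    rw [LinearMap.toMatrixAlgEquiv_apply]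
    have hbj : (AdjoinRoot.powerBasisAux' hg) j = AdjoinRoot.root g ^ (j : ℕ) := by
      have := (AdjoinRoot.powerBasis' hg).basis_eq_pow j
      exact this
    rw [hbj]
    have hap : (Algebra.lmul ℤ (AdjoinRoot g) (AdjoinRoot.root g))
        (AdjoinRoot.root g ^ (j : ℕ)) = AdjoinRoot.root g * AdjoinRoot.root g ^ (j : ℕ) := rfl
    have hm : AdjoinRoot.root g * AdjoinRoot.root g ^ (j : ℕ)
        = AdjoinRoot.mk g (X ^ ((j : ℕ) + 1)) := by
      rw [← pow_succ']
      rw [← AdjoinRoot.mk_X, ← map_pow]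
    rw [hap, hm, AdjoinRoot.powerBasisAux'_repr_apply_to_fun, AdjoinRoot.modByMonicHom_mk]
    rfl
  rw [hkey]
  rw [Polynomial.aeval_algHom_apply (LinearMap.toMatrixAlgEquiv (AdjoinRoot.powerBasisAux' hg))
      ((Algebra.lmul ℤ (AdjoinRoot g)) (AdjoinRoot.root g)) g]
  rw [Polynomial.aeval_algHom_apply (Algebra.lmul ℤ (AdjoinRoot g)) (AdjoinRoot.root g) g]
  rw [AdjoinRoot.aeval_eq, AdjoinRoot.mk_self]
  simp

lemma stdComp_apply {g : ℤ[X]} (hg : g.Monic) (i l : Fin g.natDegree) :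
    stdComp g i l = (if (l : ℕ) = g.natDegree - 1 then -(g.coeff i) else 0) +
      (if (l : ℕ) + 1 = (i : ℕ) then 1 else 0) := by
  have hld : (l : ℕ) < g.natDegree := l.isLt
  have hdeq : ((g.natDegree : ℕ) : WithBot ℕ) = g.degree := (degree_eq_natDegree hg.ne_zero).symm
  have hX : stdComp g i l = ((X ^ ((l : ℕ) + 1)) %ₘ g).coeff i := rfl
  by_cases hl : (l : ℕ) = g.natDegree - 1
  · have hdl : (l : ℕ) + 1 = g.natDegree := by omega
    have hdeg : ((X : ℤ[X]) ^ g.natDegree - g).degree < (X ^ g.natDegree : ℤ[X]).degree := by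
      apply Polynomial.degree_sub_lt
      · rw [degree_X_pow]; exact hdeq
      · exact pow_ne_zero _ X_ne_zero
      · simp [hg.leadingCoeff, Polynomial.leadingCoeff_X_pow]
    have hmod : (X : ℤ[X]) ^ ((l : ℕ) + 1) %ₘ g = X ^ g.natDegree - g := by
      rw [hdl]
      have h2 : ((X : ℤ[X]) ^ g.natDegree - g) %ₘ g = X ^ g.natDegree - g := by
        rw [Polynomial.modByMonic_eq_self_iff hg]
        refine lt_of_lt_of_eq hdeg ?_
        rw [degree_X_pow]; exact hdeq
      have h1 : ((X : ℤ[X]) ^ g.natDegree - g) %ₘ g = X ^ g.natDegree %ₘ g - g %ₘ g := sub_modByMonic _ _ _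
      have h0 : g %ₘ g = 0 := (Polynomial.modByMonic_eq_zero_iff_dvd hg).mpr dvd_rfl
      rw [h2, h0, sub_zero] at h1
      exact h1.symm
    rw [hX, hmod]
    have hco : ((X : ℤ[X]) ^ g.natDegree - g).coeff i = -(g.coeff i) := by
      rw [Polynomial.coeff_sub, Polynomial.coeff_X_pow, if_neg (Nat.ne_of_lt i.isLt)]
      ring
    rw [hco, if_pos hl, if_neg (by omega : ¬ ((l : ℕ) + 1 = (i : ℕ)))]
    ring
  · have hdl : (l : ℕ) + 1 < g.natDegree := by omega
    have hmod : (X : ℤ[X]) ^ ((l : ℕ) + 1) %ₘ g = X ^ ((l : ℕ) + 1) := by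
      rw [Polynomial.modByMonic_eq_self_iff hg, degree_X_pow, ← hdeq]
      exact_mod_cast hdl
    rw [hX, hmod, Polynomial.coeff_X_pow, if_neg hl, zero_add]
    by_cases h : (i : ℕ) = (l : ℕ) + 1
    · rw [if_pos h, if_pos h.symm]
    · rw [if_neg h, if_neg (fun hh => h hh.symm)]

/-- The unitriangular change-of-basis matrix. -/
noncomputable def chg (g : ℤ[X]) : Matrix (Fin g.natDegree) (Fin g.natDegree) ℤ :=
  Matrix.of fun i j => if (i : ℕ) ≤ (j : ℕ) then g.coeff (g.natDegree - (j : ℕ) + (i : ℕ)) else 0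

lemma chg_det {g : ℤ[X]} (hg : g.Monic) : (chg g).det = 1 := by
  have ht : (chg g).BlockTriangular id := by
    intro i j hij
    simp only [id_eq] at hij
    have hji : (j : ℕ) < (i : ℕ) := hij
    exact if_neg (by omega)
  rw [Matrix.det_of_upperTriangular ht]
  have hone : ∀ i : Fin g.natDegree, chg g i i = 1 := by
    intro i
    have h1 : g.natDegree - (i : ℕ) + (i : ℕ) = g.natDegree :=
      Nat.sub_add_cancel (le_of_lt i.isLt)
    simp [chg, h1, Polynomial.Monic.coeff_natDegree hg]
  simp [hone]

lemma sum_fin_ite {d : ℕ} (f : Fin d → ℤ) (c : ℕ) :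
    (∑ l : Fin d, if (l : ℕ) = c then f l else 0) =
      if hc : c < d then f ⟨c, hc⟩ else 0 := by
  split_ifs with hc
  · rw [Finset.sum_eq_single (⟨c, hc⟩ : Fin d)]
    · simp
    · intro b _ hb
      rw [if_neg]
      simpa [Fin.ext_iff] using hb
    · simp
  · apply Finset.sum_eq_zero
    intro l _
    rw [if_neg]
    intro h
    exact hc (h ▸ l.isLt)

lemma chg_mul_companion {g : ℤ[X]} (hg : g.Monic) (hd : 0 < g.natDegree) :
    chg g * companion g = stdComp g * chg g := by
  ext i j
  have hsplitM : ∀ l : Fin g.natDegree, chg g i l * companion g l j =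
      (if (l : ℕ) = 0 then chg g i l * (-(g.coeff (g.natDegree - 1 - (j : ℕ)))) else 0) +
      (if (l : ℕ) = (j : ℕ) + 1 then chg g i l else 0) := by
    intro l
    by_cases h0 : (l : ℕ) = 0
    · have hne : ¬ ((l : ℕ) = (j : ℕ) + 1) := by omega
      simp [companion, h0, hne]
    · by_cases h1 : (l : ℕ) = (j : ℕ) + 1 <;> simp [companion, h0, h1]
  have hsplitC : ∀ l : Fin g.natDegree, stdComp g i l * chg g l j =
      (if (l : ℕ) = g.natDegree - 1 then -(g.coeff i) * chg g l j else 0) +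
      (if (l : ℕ) + 1 = (i : ℕ) then chg g l j else 0) := by
    intro l
    rw [stdComp_apply hg, add_mul]
    congr 1
    · split_ifs <;> simp
    · split_ifs <;> simp
  rw [Matrix.mul_apply, Matrix.mul_apply]
  simp only [hsplitM, hsplitC, Finset.sum_add_distrib]
  have e1 : (∑ l : Fin g.natDegree, if (l : ℕ) = 0 then chg g i l * (-(g.coeff (g.natDegree - 1 - (j : ℕ)))) else 0)
      = chg g i ⟨0, hd⟩ * (-(g.coeff (g.natDegree - 1 - (j : ℕ)))) := by
    rw [sum_fin_ite (fun l => chg g i l * (-(g.coeff (g.natDegree - 1 - (j : ℕ))))) 0, dif_pos hd]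
  have e2 : (∑ l : Fin g.natDegree, if (l : ℕ) = (j : ℕ) + 1 then chg g i l else 0)
      = if hc : (j : ℕ) + 1 < g.natDegree then chg g i ⟨(j : ℕ) + 1, hc⟩ else 0 :=
    sum_fin_ite _ _
  have e3 : (∑ l : Fin g.natDegree, if (l : ℕ) = g.natDegree - 1 then -(g.coeff i) * chg g l j else 0)
      = -(g.coeff i) * chg g ⟨g.natDegree - 1, by omega⟩ j := by
    rw [sum_fin_ite (fun l => -(g.coeff i) * chg g l j) (g.natDegree - 1), dif_pos (by omega)]
  have e4 : (∑ l : Fin g.natDegree, if (l : ℕ) + 1 = (i : ℕ) then chg g l j else 0)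
      = if hc : 1 ≤ (i : ℕ) then chg g ⟨(i : ℕ) - 1, by omega⟩ j else 0 := by
    have hpt : ∀ l : Fin g.natDegree, (if (l : ℕ) + 1 = (i : ℕ) then chg g l j else 0)
        = if (l : ℕ) = (i : ℕ) - 1 then (if 1 ≤ (i : ℕ) then chg g l j else 0) else 0 := by
      intro l
      split_ifs with h h' h'' <;> first | rfl | omega
    have hilt : (i : ℕ) < g.natDegree := i.isLt
    rw [Finset.sum_congr rfl fun l _ => hpt l, sum_fin_ite]
    rw [dif_pos (show (i : ℕ) - 1 < g.natDegree by omega)]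
    split_ifs <;> rfl
  rw [e1, e2, e3, e4]
  clear hsplitM hsplitC e1 e2 e3 e4
  have hjd : (j : ℕ) < g.natDegree := j.isLt
  have hid : (i : ℕ) < g.natDegree := i.isLt
  have hcd : g.coeff g.natDegree = 1 := Polynomial.Monic.coeff_natDegree hg
  have hchg : ∀ (a : Fin g.natDegree) (b : Fin g.natDegree),
      chg g a b = if (a : ℕ) ≤ (b : ℕ) then g.coeff (g.natDegree - (b : ℕ) + (a : ℕ)) else 0 :=
    fun _ _ => rfl
  rcases Nat.eq_zero_or_pos (i : ℕ) with hi | hi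
  · -- i = 0
    rw [dif_neg (by omega : ¬ 1 ≤ (i : ℕ))]
    have hc0 : chg g i ⟨0, hd⟩ = 1 := by
      rw [hchg]
      simp only [hi]
      rw [if_pos (by omega)]
      rw [show g.natDegree - (0 : ℕ) + 0 = g.natDegree by omega, hcd]
    have hcd1 : chg g ⟨g.natDegree - 1, by omega⟩ j =
        if (j : ℕ) = g.natDegree - 1 then 1 else 0 := by
      rw [hchg]
      by_cases hj : (j : ℕ) = g.natDegree - 1
      · rw [if_pos (by simp; omega), if_pos hj]
        rw [show g.natDegree - (j : ℕ) + (g.natDegree - 1) = g.natDegree by omega, hcd]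
      · rw [if_neg (by simp; omega), if_neg hj]
    rw [hc0, hcd1]
    by_cases hj : (j : ℕ) + 1 < g.natDegree
    · rw [dif_pos hj, if_neg (by omega)]
      rw [hchg]
      rw [if_pos (by simp; omega)]
      simp only [hi]
      rw [show g.natDegree - ((j : ℕ) + 1) + 0 = g.natDegree - 1 - (j : ℕ) by omega]
      ring
    · rw [dif_neg hj, if_pos (by omega)]
      simp only [hi]
      rw [show g.natDegree - 1 - (j : ℕ) = 0 by omega]
      ring
  · -- i ≥ 1
    rw [dif_pos (show 1 ≤ (i : ℕ) from hi)]
    have hc0 : chg g i ⟨0, hd⟩ = 0 := by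
      rw [hchg, if_neg (by simp; omega)]
    rw [hc0]
    have hcd1 : chg g ⟨g.natDegree - 1, by omega⟩ j =
        if (j : ℕ) = g.natDegree - 1 then 1 else 0 := by
      rw [hchg]
      by_cases hj : (j : ℕ) = g.natDegree - 1
      · rw [if_pos (by simp; omega), if_pos hj]
        rw [show g.natDegree - (j : ℕ) + (g.natDegree - 1) = g.natDegree by omega, hcd]
      · rw [if_neg (by simp; omega), if_neg hj]
    rw [hcd1]
    by_cases hj : (j : ℕ) + 1 < g.natDegree
    · rw [dif_pos hj, if_neg (by omega)]
      rw [hchg, hchg]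
      by_cases hij : (i : ℕ) ≤ (j : ℕ) + 1
      · rw [if_pos (by simpa using hij), if_pos (by simp; omega)]
        rw [show g.natDegree - ((j : ℕ) + 1) + (i : ℕ) = g.natDegree - (j : ℕ) + ((i : ℕ) - 1) by omega]
        ring
      · rw [if_neg (by simpa using hij), if_neg (by simp; omega)]
        ring
    · rw [dif_neg hj, if_pos (by omega)]
      rw [hchg, if_pos (by simp; omega)]
      rw [show g.natDegree - (j : ℕ) + ((i : ℕ) - 1) = (i : ℕ) by omega]
      ring

/-- Conjugation by an invertible matrix as an algebra equivalence. -/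
def conjAlgEquiv {n : Type*} [Fintype n] [DecidableEq n]
    (P Q : Matrix n n ℤ) (h1 : P * Q = 1) (h2 : Q * P = 1) :
    Matrix n n ℤ ≃ₐ[ℤ] Matrix n n ℤ where
  toFun A := Q * A * P
  invFun A := P * A * Q
  left_inv A := by
    calc P * (Q * A * P) * Q = (P * Q) * A * (P * Q) := by
          simp only [Matrix.mul_assoc]
    _ = A := by rw [h1, Matrix.one_mul, Matrix.mul_one]
  right_inv A := by
    calc Q * (P * A * Q) * P = (Q * P) * A * (Q * P) := by
          simp only [Matrix.mul_assoc]
    _ = A := by rw [h2, Matrix.one_mul, Matrix.mul_one]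
  map_mul' A B := by
    calc Q * (A * B) * P = Q * A * ((P * Q) * (B * P)) := by
          rw [h1, Matrix.one_mul]; simp only [Matrix.mul_assoc]
    _ = (Q * A * P) * (Q * B * P) := by simp only [Matrix.mul_assoc]
  map_add' A B := by
    show Q * (A + B) * P = Q * A * P + Q * B * P
    rw [Matrix.mul_add, Matrix.add_mul]
  commutes' r := by
    simp only [Algebra.algebraMap_eq_smul_one]
    rw [Matrix.mul_smul, mul_one, Matrix.smul_mul, h2]

lemma aeval_companion {g : ℤ[X]} (hg : g.Monic) (hd : 0 < g.natDegree) :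
    aeval (companion g) g = 0 := by
  have hinv : Invertible (chg g) :=
    Matrix.invertibleOfIsUnitDet _ (by rw [chg_det hg]; exact isUnit_one)
  have h1 : chg g * ⅟(chg g) = 1 := mul_invOf_self _
  have h2 : ⅟(chg g) * chg g = 1 := invOf_mul_self _
  have hM : companion g = ⅟(chg g) * stdComp g * chg g := by
    have := chg_mul_companion hg hd
    calc companion g = (⅟(chg g) * chg g) * companion g := by rw [h2, one_mul]
    _ = ⅟(chg g) * (chg g * companion g) := by rw [mul_assoc]
    _ = ⅟(chg g) * (stdComp g * chg g) := by rw [this]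
    _ = ⅟(chg g) * stdComp g * chg g := by rw [mul_assoc]
  have hconj : companion g = (conjAlgEquiv (chg g) (⅟(chg g)) h1 h2) (stdComp g) := by
    rw [hM]; rfl
  rw [hconj, Polynomial.aeval_algHom_apply (conjAlgEquiv (chg g) (⅟(chg g)) h1 h2) (stdComp g) g,
    aeval_stdComp hg, map_zero]

/-- For a prime `p`, `h ≥ 1`, `k ≥ 1`, `n = p^h`, `m = n·p^k`, one has
`Φ_m(t) ≡ p (mod Φ_n(t))` in `ℤ[t]`, and consequently `Φ_m(C_{Φ_n}) = p·I`. -/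
theorem stmt15 (p h k n m : ℕ) (hp : p.Prime) (hh : 1 ≤ h) (hk : 1 ≤ k)
    (hn : n = p ^ h) (hm : m = n * p ^ k) :
    (Polynomial.cyclotomic n ℤ ∣
      Polynomial.cyclotomic m ℤ - Polynomial.C (p : ℤ)) ∧
    Polynomial.aeval (companion (Polynomial.cyclotomic n ℤ))
      (Polynomial.cyclotomic m ℤ) = (p : ℤ) • 1 := by
  have hdvd : Polynomial.cyclotomic n ℤ ∣
      Polynomial.cyclotomic m ℤ - Polynomial.C (p : ℤ) := by
    have hm' : m = p ^ ((h + k - 1) + 1) := by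
      rw [hm, hn, ← pow_add]
      congr 1
      omega
    have hcyc : Polynomial.cyclotomic m ℤ =
        ∑ i ∈ Finset.range p, ((X : ℤ[X]) ^ (p ^ (h + k - 1))) ^ i := by
      rw [hm', Polynomial.cyclotomic_prime_pow_eq_geom_sum hp]
    have hC : (Polynomial.C ((p : ℤ)) : ℤ[X]) = ∑ _i ∈ Finset.range p, (1 : ℤ[X]) := by
      simp [Finset.sum_const]
    rw [hcyc, hC, ← Finset.sum_sub_distrib]
    apply Finset.dvd_sum
    intro i _
    have hdvd1 : Polynomial.cyclotomic n ℤ ∣ (X : ℤ[X]) ^ n - 1 :=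
      Polynomial.cyclotomic.dvd_X_pow_sub_one n ℤ
    have hdvd2 : ((X : ℤ[X]) ^ n - 1) ∣ ((X : ℤ[X]) ^ (p ^ (h + k - 1))) ^ i - 1 := by
      have : ((X : ℤ[X]) ^ (p ^ (h + k - 1))) ^ i = ((X : ℤ[X]) ^ n) ^ (p ^ (k - 1) * i) := by
        rw [← pow_mul, ← pow_mul, hn]
        congr 1
        rw [← mul_assoc, ← pow_add]
        congr 2
        omega
      rw [this]
      have := sub_dvd_pow_sub_pow ((X : ℤ[X]) ^ n) 1 (p ^ (k - 1) * i)
      rwa [one_pow] at this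
    exact hdvd1.trans hdvd2
  refine ⟨hdvd, ?_⟩
  obtain ⟨q, hq⟩ := hdvd
  have heq : Polynomial.cyclotomic m ℤ =
      Polynomial.cyclotomic n ℤ * q + Polynomial.C (p : ℤ) := by
    rw [← hq]; ring
  have hmonic : (Polynomial.cyclotomic n ℤ).Monic := Polynomial.cyclotomic.monic n ℤ
  have hdeg : 0 < (Polynomial.cyclotomic n ℤ).natDegree := by
    rw [Polynomial.natDegree_cyclotomic]
    rw [hn]
    exact Nat.totient_pos.mpr (pow_pos hp.pos h)
  rw [heq, _root_.map_add, _root_.map_mul, aeval_companion hmonic hdeg, zero_mul, zero_add,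
    Polynomial.aeval_C, Algebra.algebraMap_eq_smul_one]
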